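/- arXiv:2604.01873 — 4 statements merged into one kernel-verified Lean document; each statement's English description precedes it below -/
import Mathlib

section
/- Let E be a real inner product space, let u, y ∈ E with u ≠ 0, and let Π be a real symmetric 2×2 matrix with entries π₁₁, π₁₂, π₂₂. Then the SRG points z_±(u, y) satisfy Re z_±(u, y) = ⟪u, y⟫/‖u‖² and |z_±(u, y)| = ‖y‖/‖u‖, and consequently z_±(u, y) ∈ S(Π) if and only if π₁₁·‖u‖² + 2·π₁₂·⟪u, y⟫ + π₂₂·‖y‖² ≥ 0. -/
open scoped RealInnerProductSpace Classical

/-- The region `S(Π)` in the complex plane associated with a real symmetric 2×2 matrix `Π`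
with entries `π₁₁, π₁₂, π₂₂`:  `S(Π) = {z ∈ ℂ : π₁₁ + 2·π₁₂·Re z + π₂₂·|z|² ≥ 0}`. -/
def SRegion (p11 p12 p22 : ℝ) : Set ℂ :=
  {z : ℂ | 0 ≤ p11 + 2 * p12 * z.re + p22 * ‖z‖ ^ 2}

/-- SRG point `z₊(u, y) = (‖y‖/‖u‖)·exp(+i·arccos(⟪u,y⟫/(‖u‖‖y‖)))` (and `0` for `y = 0`). -/

noncomputable def srgPlus {E : Type*} [NormedAddCommGroup E] [InnerProductSpace ℝ E]
    (u y : E) : ℂ :=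
  if y = 0 then 0 else
    ((‖y‖ / ‖u‖ : ℝ) : ℂ) *
      Complex.exp (Complex.I * (Real.arccos (⟪u, y⟫ / (‖u‖ * ‖y‖)) : ℝ))

/-- SRG point `z₋(u, y) = (‖y‖/‖u‖)·exp(−i·arccos(⟪u,y⟫/(‖u‖‖y‖)))` (and `0` for `y = 0`). -/

noncomputable def srgMinus {E : Type*} [NormedAddCommGroup E] [InnerProductSpace ℝ E]
    (u y : E) : ℂ :=
  if y = 0 then 0 else
    ((‖y‖ / ‖u‖ : ℝ) : ℂ) *
      Complex.exp (-Complex.I * (Real.arccos (⟪u, y⟫ / (‖u‖ * ‖y‖)) : ℝ))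

lemma aux_re (c θ : ℝ) : ((c : ℂ) * Complex.exp (Complex.I * θ)).re = c * Real.cos θ := by
  rw [mul_comm Complex.I, Complex.exp_mul_I]
  simp [Complex.mul_re, Complex.cos_ofReal_re]

lemma aux_re' (c θ : ℝ) : ((c : ℂ) * Complex.exp (-Complex.I * θ)).re = c * Real.cos θ := by
  have h : -Complex.I * (θ:ℂ) = Complex.I * ((-θ : ℝ) : ℂ) := by push_cast; ring
  rw [h, aux_re, Real.cos_neg]

lemma aux_abs (c θ : ℝ) (hc : 0 ≤ c) :
    ‖(c : ℂ) * Complex.exp (Complex.I * θ)‖ = c := by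
  rw [norm_mul, Complex.norm_exp]
  simp [abs_of_nonneg hc]

lemma aux_abs' (c θ : ℝ) (hc : 0 ≤ c) :
    ‖(c : ℂ) * Complex.exp (-Complex.I * θ)‖ = c := by
  have h : -Complex.I * (θ:ℂ) = Complex.I * ((-θ : ℝ) : ℂ) := by push_cast; ring
  rw [h, aux_abs _ _ hc]

/-- For `u ≠ 0` in a real inner product space, the SRG points `z_±(u,y)` satisfy
`Re z_± = ⟪u,y⟫/‖u‖²`, `|z_±| = ‖y‖/‖u‖`, and hence `z_±(u,y) ∈ S(Π)` iff
`π₁₁‖u‖² + 2π₁₂⟪u,y⟫ + π₂₂‖y‖² ≥ 0`. -/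
theorem srg_point_re_abs_mem {E : Type*} [NormedAddCommGroup E] [InnerProductSpace ℝ E]
    (u y : E) (hu : u ≠ 0) (p11 p12 p22 : ℝ) :
    ((srgPlus u y).re = ⟪u, y⟫ / ‖u‖ ^ 2 ∧ (srgMinus u y).re = ⟪u, y⟫ / ‖u‖ ^ 2) ∧
    (‖srgPlus u y‖ = ‖y‖ / ‖u‖ ∧ ‖srgMinus u y‖ = ‖y‖ / ‖u‖) ∧
    ((srgPlus u y ∈ SRegion p11 p12 p22 ∧ srgMinus u y ∈ SRegion p11 p12 p22) ↔
      0 ≤ p11 * ‖u‖ ^ 2 + 2 * p12 * ⟪u, y⟫ + p22 * ‖y‖ ^ 2) := by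
  have hn : (0:ℝ) < ‖u‖ := norm_pos_iff.mpr hu
  have hn2 : (0:ℝ) < ‖u‖ ^ 2 := by positivity
  have hre1 : (srgPlus u y).re = ⟪u, y⟫ / ‖u‖ ^ 2 := by
    by_cases hy : y = 0
    · simp [srgPlus, hy, inner_zero_right]
    · have hm : (0:ℝ) < ‖y‖ := norm_pos_iff.mpr hy
      have ht1 : -1 ≤ ⟪u, y⟫ / (‖u‖ * ‖y‖) := by
        rw [neg_le, ← neg_div, div_le_one (by positivity)]
        nlinarith [abs_real_inner_le_norm u y, abs_nonneg ⟪u, y⟫, neg_abs_le ⟪u, y⟫]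
      have ht2 : ⟪u, y⟫ / (‖u‖ * ‖y‖) ≤ 1 := by
        rw [div_le_iff₀ (by positivity), one_mul]
        nlinarith [abs_real_inner_le_norm u y, le_abs_self ⟪u, y⟫]
      rw [srgPlus, if_neg hy, aux_re, Real.cos_arccos ht1 ht2]
      field_simp
  have hre2 : (srgMinus u y).re = ⟪u, y⟫ / ‖u‖ ^ 2 := by
    by_cases hy : y = 0
    · simp [srgMinus, hy, inner_zero_right]
    · have hm : (0:ℝ) < ‖y‖ := norm_pos_iff.mpr hy
      have ht1 : -1 ≤ ⟪u, y⟫ / (‖u‖ * ‖y‖) := by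
        rw [neg_le, ← neg_div, div_le_one (by positivity)]
        nlinarith [abs_real_inner_le_norm u y, neg_abs_le ⟪u, y⟫]
      have ht2 : ⟪u, y⟫ / (‖u‖ * ‖y‖) ≤ 1 := by
        rw [div_le_iff₀ (by positivity), one_mul]
        nlinarith [abs_real_inner_le_norm u y, le_abs_self ⟪u, y⟫]
      rw [srgMinus, if_neg hy, aux_re', Real.cos_arccos ht1 ht2]
      field_simp
  have habs1 : ‖srgPlus u y‖ = ‖y‖ / ‖u‖ := by
    by_cases hy : y = 0
    · simp [srgPlus, hy]
    · rw [srgPlus, if_neg hy, aux_abs _ _ (by positivity)]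
  have habs2 : ‖srgMinus u y‖ = ‖y‖ / ‖u‖ := by
    by_cases hy : y = 0
    · simp [srgMinus, hy]
    · rw [srgMinus, if_neg hy, aux_abs' _ _ (by positivity)]
  refine ⟨⟨hre1, hre2⟩, ⟨habs1, habs2⟩, ?_⟩
  have heq : p11 + 2 * p12 * (⟪u, y⟫ / ‖u‖ ^ 2) + p22 * (‖y‖ / ‖u‖) ^ 2 =
      (p11 * ‖u‖ ^ 2 + 2 * p12 * ⟪u, y⟫ + p22 * ‖y‖ ^ 2) / ‖u‖ ^ 2 := by
    field_simp
  simp only [SRegion, Set.mem_setOf_eq, hre1, hre2, habs1, habs2, heq, le_div_iff₀ hn2,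
    zero_mul, and_self]
end

section
/- Let H ∈ ℂ^{n×n} and let Π be a real symmetric 2×2 matrix with entries π₁₁, π₁₂, π₂₂. Then the Hermitian matrix π₁₁·Iₙ + π₁₂·(H + H*) + π₂₂·H*H is positive semidefinite if and only if the frequency-wise SRG of H is contained in S(Π). (The matrix π₁₁·Iₙ + π₁₂·(H + H*) + π₂₂·H*H equals [Iₙ; H]* (Π ⊗ Iₙ) [Iₙ; H] for the stacked 2n×n matrix [Iₙ; H].) -/
open Matrix
open scoped ComplexOrder Classical

/-- SRG point `z₊(u, y) = (‖y‖/‖u‖)·exp(+i·arccos(Re⟪u,y⟫/(‖u‖‖y‖)))` for complex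
vectors (and `0` for `y = 0`). -/
noncomputable def srgPlusC {n : ℕ} (u y : EuclideanSpace ℂ (Fin n)) : ℂ :=
  if y = 0 then 0 else
    ((‖y‖ / ‖u‖ : ℝ) : ℂ) *
      Complex.exp (Complex.I *
        (Real.arccos ((inner ℂ u y : ℂ).re / (‖u‖ * ‖y‖)) : ℝ))

/-- SRG point `z₋(u, y) = (‖y‖/‖u‖)·exp(−i·arccos(Re⟪u,y⟫/(‖u‖‖y‖)))` for complex
vectors (and `0` for `y = 0`). -/
noncomputable def srgMinusC {n : ℕ} (u y : EuclideanSpace ℂ (Fin n)) : ℂ :=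
  if y = 0 then 0 else
    ((‖y‖ / ‖u‖ : ℝ) : ℂ) *
      Complex.exp (-Complex.I *
        (Real.arccos ((inner ℂ u y : ℂ).re / (‖u‖ * ‖y‖)) : ℝ))

/-- Matrix-vector multiplication, viewed on `EuclideanSpace ℂ (Fin n)`. -/
noncomputable def mulVecE {n : ℕ} (H : Matrix (Fin n) (Fin n) ℂ)
    (u : EuclideanSpace ℂ (Fin n)) : EuclideanSpace ℂ (Fin n) :=
  (WithLp.equiv 2 _).symm (H *ᵥ (WithLp.equiv 2 _) u)

/-- The frequency-wise SRG of a matrix `H ∈ ℂ^{n×n}`: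
`SRG(H) = ⋃ {z_±(u, Hu)}` over all nonzero `u ∈ ℂⁿ`. -/
noncomputable def fwSRG {n : ℕ} (H : Matrix (Fin n) (Fin n) ℂ) : Set ℂ :=
  {z : ℂ | ∃ u : EuclideanSpace ℂ (Fin n), u ≠ 0 ∧
    (z = srgPlusC u (mulVecE H u) ∨ z = srgMinusC u (mulVecE H u))}

lemma quad_eq {n : ℕ} (H : Matrix (Fin n) (Fin n) ℂ) (p11 p12 p22 : ℝ)
    (u : EuclideanSpace ℂ (Fin n)) :
    dotProduct (star ((WithLp.equiv 2 _) u))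
      ((p11 • (1 : Matrix (Fin n) (Fin n) ℂ) + p12 • (H + Hᴴ) + p22 • (Hᴴ * H)) *ᵥ
        (WithLp.equiv 2 _) u)
    = ((p11 * ‖u‖^2 + 2 * p12 * (inner ℂ u (mulVecE H u) : ℂ).re
        + p22 * ‖mulVecE H u‖^2 : ℝ) : ℂ) := by
  set x : Fin n → ℂ := (WithLp.equiv 2 _) u with hx
  have h1 : dotProduct (star x) x = ((‖u‖^2 : ℝ) : ℂ) := by
    have := inner_self_eq_norm_sq_to_K (𝕜 := ℂ) u
    rw [EuclideanSpace.inner_eq_star_dotProduct, dotProduct_comm] at this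
    change star u.ofLp ⬝ᵥ u.ofLp = _
    rw [this]; norm_cast
  have hy : (WithLp.equiv 2 _) (mulVecE H u) = H *ᵥ x := by
    simp [mulVecE, hx]
  have h3 : dotProduct (star (H *ᵥ x)) (H *ᵥ x) = ((‖mulVecE H u‖^2 : ℝ) : ℂ) := by
    have := inner_self_eq_norm_sq_to_K (𝕜 := ℂ) (mulVecE H u)
    rw [EuclideanSpace.inner_eq_star_dotProduct, dotProduct_comm] at this
    change star ((WithLp.equiv 2 _) (mulVecE H u)) ⬝ᵥ (WithLp.equiv 2 _) (mulVecE H u) = _ at this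
    rw [hy] at this
    rw [this]; norm_cast
  have h2 : dotProduct (star x) (Hᴴ *ᵥ x) = star (dotProduct (star x) (H *ᵥ x)) := by
    rw [← star_dotProduct_star, star_star, star_mulVec, dotProduct_mulVec]
  have h4 : dotProduct (star x) ((Hᴴ * H) *ᵥ x) = dotProduct (star (H *ᵥ x)) (H *ᵥ x) := by
    rw [← mulVec_mulVec, dotProduct_mulVec, ← star_mulVec]
  have hinner : (inner ℂ u (mulVecE H u) : ℂ) = dotProduct (star x) (H *ᵥ x) := by
    rw [EuclideanSpace.inner_eq_star_dotProduct, dotProduct_comm]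
    change star ((WithLp.equiv 2 _) u) ⬝ᵥ (WithLp.equiv 2 _) (mulVecE H u) = _
    rw [hy]
  rw [add_mulVec, add_mulVec, dotProduct_add, dotProduct_add,
    smul_mulVec, smul_mulVec, smul_mulVec,
    dotProduct_smul, dotProduct_smul, dotProduct_smul, one_mulVec,
    add_mulVec, dotProduct_add, h2, h4, h1, h3, hinner]
  set a : ℂ := dotProduct (star x) (H *ᵥ x) with ha
  have h5 : a + star a = ((2 * a.re : ℝ) : ℂ) := by
    rw [show (star a) = (starRingEnd ℂ) a from rfl, Complex.add_conj]
  rw [h5]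
  push_cast [Complex.real_smul]
  ring

lemma srg_re_abs {n : ℕ} (u y : EuclideanSpace ℂ (Fin n)) (hu : u ≠ 0) (z : ℂ)
    (hz : z = srgPlusC u y ∨ z = srgMinusC u y) :
    z.re * ‖u‖^2 = (inner ℂ u y : ℂ).re ∧ ‖z‖ = ‖y‖ / ‖u‖ := by
  by_cases hy : y = 0
  · have hz0 : z = 0 := by
      rcases hz with h | h <;> simp [h, srgPlusC, srgMinusC, hy]
    simp [hz0, hy]
  · have hun : (0:ℝ) < ‖u‖ := norm_pos_iff.mpr hu
    have hyn : (0:ℝ) < ‖y‖ := norm_pos_iff.mpr hy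
    have hb : |(inner ℂ u y : ℂ).re| ≤ ‖u‖ * ‖y‖ := by
      calc |(inner ℂ u y : ℂ).re| ≤ ‖(inner ℂ u y : ℂ)‖ := Complex.abs_re_le_norm _
        _ = ‖(inner ℂ u y : ℂ)‖ := rfl
        _ ≤ ‖u‖ * ‖y‖ := norm_inner_le_norm u y
    have hc1 : -1 ≤ (inner ℂ u y : ℂ).re / (‖u‖ * ‖y‖) := by
      rw [le_div_iff₀ (by positivity)]
      nlinarith [abs_le.mp hb]
    have hc2 : (inner ℂ u y : ℂ).re / (‖u‖ * ‖y‖) ≤ 1 := by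
      rw [div_le_one (by positivity)]
      nlinarith [abs_le.mp hb]
    have hcos : Real.cos (Real.arccos ((inner ℂ u y : ℂ).re / (‖u‖ * ‖y‖)))
        = (inner ℂ u y : ℂ).re / (‖u‖ * ‖y‖) := Real.cos_arccos hc1 hc2
    have hexp1 : ∀ s : ℝ, (Complex.exp (Complex.I * (s:ℂ))).re = Real.cos s := fun s => by
      rw [mul_comm]; exact Complex.exp_ofReal_mul_I_re s
    have hexp2 : ∀ s : ℝ, (Complex.exp (-Complex.I * (s:ℂ))).re = Real.cos s := fun s => by
      rw [show -Complex.I * (s:ℂ) = ((-s:ℝ):ℂ) * Complex.I by push_cast; ring,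
        Complex.exp_ofReal_mul_I_re, Real.cos_neg]
    have habs1 : ∀ s : ℝ, ‖Complex.exp (Complex.I * (s:ℂ))‖ = 1 := fun s => by
      rw [mul_comm]; exact Complex.norm_exp_ofReal_mul_I s
    have habs2 : ∀ s : ℝ, ‖Complex.exp (-Complex.I * (s:ℂ))‖ = 1 := fun s => by
      rw [show -Complex.I * (s:ℂ) = ((-s:ℝ):ℂ) * Complex.I by push_cast; ring]
      exact Complex.norm_exp_ofReal_mul_I (-s)
    have hre : z.re = (‖y‖ / ‖u‖) * ((inner ℂ u y : ℂ).re / (‖u‖ * ‖y‖)) := by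
      rcases hz with h | h
      · rw [h, srgPlusC, if_neg hy, Complex.re_ofReal_mul, hexp1, hcos]
      · rw [h, srgMinusC, if_neg hy, Complex.re_ofReal_mul, hexp2, hcos]
    have habs : ‖z‖ = ‖y‖ / ‖u‖ := by
      rcases hz with h | h
      · rw [h, srgPlusC, if_neg hy, norm_mul, habs1, mul_one,
          Complex.norm_real, Real.norm_eq_abs, abs_of_nonneg (le_of_lt (div_pos hyn hun))]
      · rw [h, srgMinusC, if_neg hy, norm_mul, habs2, mul_one,
          Complex.norm_real, Real.norm_eq_abs, abs_of_nonneg (le_of_lt (div_pos hyn hun))]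
    refine ⟨?_, habs⟩
    rw [hre]
    field_simp

lemma mem_region_iff {n : ℕ} (p11 p12 p22 : ℝ) (u y : EuclideanSpace ℂ (Fin n))
    (hu : u ≠ 0) (z : ℂ) (hz : z = srgPlusC u y ∨ z = srgMinusC u y) :
    z ∈ SRegion p11 p12 p22 ↔
      0 ≤ p11 * ‖u‖^2 + 2 * p12 * (inner ℂ u y : ℂ).re + p22 * ‖y‖^2 := by
  obtain ⟨h1, habs⟩ := srg_re_abs u y hu z hz
  have hun : (0:ℝ) < ‖u‖ := norm_pos_iff.mpr hu
  have h5 : (‖y‖ / ‖u‖)^2 * ‖u‖^2 = ‖y‖^2 := by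
    field_simp
  have key : (p11 + 2 * p12 * z.re + p22 * ‖z‖ ^ 2) * ‖u‖^2
      = p11 * ‖u‖^2 + 2 * p12 * (inner ℂ u y : ℂ).re + p22 * ‖y‖^2 := by
    rw [habs]
    linear_combination 2 * p12 * h1 + p22 * h5
  rw [SRegion, Set.mem_setOf_eq, ← key]
  have hu2 : (0:ℝ) < ‖u‖^2 := by positivity
  constructor
  · intro h; exact mul_nonneg h (le_of_lt hu2)
  · intro h
    exact (mul_nonneg_iff_of_pos_right hu2).mp h

/-- For `H ∈ ℂ^{n×n}` and a real symmetric 2×2 matrix `Π` with entries `π₁₁, π₁₂, π₂₂`,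
`π₁₁·Iₙ + π₁₂·(H + H*) + π₂₂·H*H = [Iₙ; H]*(Π ⊗ Iₙ)[Iₙ; H]` is positive semidefinite iff
the frequency-wise SRG of `H` is contained in `S(Π)`. -/
theorem fw_srg_subset_iff_psd (n : ℕ) (H : Matrix (Fin n) (Fin n) ℂ)
    (p11 p12 p22 : ℝ) :
    (p11 • (1 : Matrix (Fin n) (Fin n) ℂ) + p12 • (H + Hᴴ) + p22 • (Hᴴ * H)).PosSemidef ↔
      fwSRG H ⊆ SRegion p11 p12 p22 := by
  constructor
  · rintro hPSD z ⟨u, hu, hz⟩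
    have hq := (posSemidef_iff_dotProduct_mulVec.mp hPSD).2 ((WithLp.equiv 2 (Fin n → ℂ)) u)
    rw [quad_eq] at hq
    rw [mem_region_iff p11 p12 p22 u (mulVecE H u) hu z hz]
    exact_mod_cast hq
  · intro hsub
    refine posSemidef_iff_dotProduct_mulVec.mpr ⟨?_, ?_⟩
    · unfold Matrix.IsHermitian
      simp only [conjTranspose_add, conjTranspose_smul, conjTranspose_mul,
        conjTranspose_one, conjTranspose_conjTranspose, star_trivial]
      module
    · intro x
      have hq := quad_eq H p11 p12 p22 ((WithLp.equiv 2 (Fin n → ℂ)).symm x)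
      rw [Equiv.apply_symm_apply] at hq
      rw [hq]
      by_cases hu : (WithLp.equiv 2 (Fin n → ℂ)).symm x = (0 : EuclideanSpace ℂ (Fin n))
      · simp [hu, mulVecE]
      · have hmem : srgPlusC ((WithLp.equiv 2 (Fin n → ℂ)).symm x)
            (mulVecE H ((WithLp.equiv 2 (Fin n → ℂ)).symm x)) ∈ fwSRG H :=
          ⟨(WithLp.equiv 2 (Fin n → ℂ)).symm x, hu, Or.inl rfl⟩
        have hQ := (mem_region_iff p11 p12 p22 _ _ hu _ (Or.inl rfl)).mp (hsub hmem)
        exact_mod_cast hQ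
end

section
/- Let A ∈ ℝ^{k×k}, B ∈ ℝ^{k×2n}, C ∈ ℝ^{m×k}, D ∈ ℝ^{m×2n}, let M be a real symmetric m×m matrix, let Π be a real symmetric 2×2 matrix, let P be a real symmetric positive semidefinite k×k matrix, and let τ > 0. Suppose the LMI holds: the real symmetric (k+2n)×(k+2n) block matrix [[AᵀP + PA, PB], [BᵀP, −(Π ⊗ Iₙ)]] + τ·[C D]ᵀ M [C D] is negative semidefinite. Let v : [0,∞) → ℝ^{2n} be continuous, let x : [0,∞) → ℝ^k be continuously differentiable with x'(t) = A x(t) + B v(t) for all t ≥ 0 and x(0) = 0, and set g(t) := C x(t) + D v(t). Then for every T ≥ 0: τ·∫₀ᵀ g(t)ᵀ M g(t) dt + x(T)ᵀ P x(T) ≤ ∫₀ᵀ v(t)ᵀ (Π ⊗ Iₙ) v(t) dt. -/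
open Matrix

/-- `Π ⊗ Iₙ` : the real `2n×2n` block matrix
`[[π₁₁·Iₙ, π₁₂·Iₙ], [π₁₂·Iₙ, π₂₂·Iₙ]]` associated with the real symmetric 2×2 matrix
with entries `π₁₁, π₁₂, π₂₂`. -/
def piKronR (n : ℕ) (p11 p12 p22 : ℝ) :
    Matrix (Fin n ⊕ Fin n) (Fin n ⊕ Fin n) ℝ :=
  Matrix.fromBlocks (p11 • 1) (p12 • 1) (p12 • 1) (p22 • 1)

private lemma dot_transpose_mulVec {m n : Type*} [Fintype m] [Fintype n]
    (A : Matrix m n ℝ) (x : n → ℝ) (y : m → ℝ) :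
    x ⬝ᵥ (Aᵀ *ᵥ y) = (A *ᵥ x) ⬝ᵥ y := by
  simp only [dotProduct, mulVec, transpose_apply, Finset.mul_sum, Finset.sum_mul]
  rw [Finset.sum_comm]
  exact Finset.sum_congr rfl fun j _ => Finset.sum_congr rfl fun i _ => by ring

private lemma quad_hasDerivAt {k : ℕ} (P : Matrix (Fin k) (Fin k) ℝ)
    {x : ℝ → Fin k → ℝ} {x' : Fin k → ℝ} {t : ℝ} (hx : HasDerivAt x x' t) :
    HasDerivAt (fun s => x s ⬝ᵥ (P *ᵥ x s))
      (x' ⬝ᵥ (P *ᵥ x t) + x t ⬝ᵥ (P *ᵥ x')) t := by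
  have hi : ∀ i, HasDerivAt (fun s => x s i) (x' i) t := fun i => hasDerivAt_pi.1 hx i
  have hPi : ∀ i, HasDerivAt (fun s => (P *ᵥ x s) i) ((P *ᵥ x') i) t := by
    intro i
    simpa [mulVec, dotProduct] using
      HasDerivAt.fun_sum (fun j (_ : j ∈ Finset.univ) => (hi j).const_mul (P i j))
  have h := HasDerivAt.fun_sum (fun i (_ : i ∈ Finset.univ) => (hi i).mul (hPi i))
  simpa [dotProduct, Finset.sum_add_distrib] using h

/-- Dissipation inequality from the LMI: if
`[[AᵀP + PA, PB], [BᵀP, −(Π ⊗ Iₙ)]] + τ·[C D]ᵀM[C D] ⪯ 0` with `P = Pᵀ ⪰ 0`, `τ > 0`,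
then along any solution of `x' = Ax + Bv`, `x(0) = 0`, with output `g = Cx + Dv`,
`τ·∫₀ᵀ gᵀMg dt + x(T)ᵀPx(T) ≤ ∫₀ᵀ vᵀ(Π ⊗ Iₙ)v dt` for every `T ≥ 0`. -/
theorem lmi_dissipation (n m k : ℕ)
    (A : Matrix (Fin k) (Fin k) ℝ) (B : Matrix (Fin k) (Fin n ⊕ Fin n) ℝ)
    (C : Matrix (Fin m) (Fin k) ℝ) (D : Matrix (Fin m) (Fin n ⊕ Fin n) ℝ)
    (M : Matrix (Fin m) (Fin m) ℝ) (hM : M.IsSymm)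
    (p11 p12 p22 : ℝ)
    (P : Matrix (Fin k) (Fin k) ℝ) (hP : P.PosSemidef)
    (τ : ℝ) (hτ : 0 < τ)
    (hLMI : (-(Matrix.fromBlocks (Aᵀ * P + P * A) (P * B) (Bᵀ * P)
          (-(piKronR n p11 p12 p22)) +
        τ • ((Matrix.fromCols C D)ᵀ * M * Matrix.fromCols C D))).PosSemidef)
    (v : ℝ → (Fin n ⊕ Fin n) → ℝ) (hv : Continuous v)
    (x : ℝ → Fin k → ℝ) (hx0 : x 0 = 0)
    (hx : ∀ t : ℝ, 0 ≤ t → HasDerivAt x (A *ᵥ x t + B *ᵥ v t) t)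
    (g : ℝ → Fin m → ℝ) (hg : ∀ t : ℝ, g t = C *ᵥ x t + D *ᵥ v t) :
    ∀ T : ℝ, 0 ≤ T →
      τ * (∫ t in (0:ℝ)..T, g t ⬝ᵥ (M *ᵥ g t)) + x T ⬝ᵥ (P *ᵥ x T) ≤
        ∫ t in (0:ℝ)..T, v t ⬝ᵥ ((piKronR n p11 p12 p22) *ᵥ v t) := by
  intro T hT
  set Pi2 := piKronR n p11 p12 p22 with hPi2
  set φ : ℝ → ℝ := fun t =>
    (A *ᵥ x t + B *ᵥ v t) ⬝ᵥ (P *ᵥ x t) + x t ⬝ᵥ (P *ᵥ (A *ᵥ x t + B *ᵥ v t)) with hφ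
  -- pointwise inequality from the LMI
  have key : ∀ t : ℝ, φ t + τ * (g t ⬝ᵥ (M *ᵥ g t)) ≤ v t ⬝ᵥ (Pi2 *ᵥ v t) := by
    intro t
    have h := hLMI.dotProduct_mulVec_nonneg (fun i => (Sum.elim (x t) (v t) i : ℝ))
    have hz : (fun i => (Sum.elim (x t) (v t) i : ℝ)) = Sum.elim (x t) (v t) := rfl
    rw [hz] at h
    set z : Fin k ⊕ (Fin n ⊕ Fin n) → ℝ := Sum.elim (x t) (v t) with hzdef
    set E := Matrix.fromCols C D with hE
    set S := Matrix.fromBlocks (Aᵀ * P + P * A) (P * B) (Bᵀ * P) (-Pi2) with hS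
    have hneg : z ⬝ᵥ ((S + τ • (Eᵀ * M * E)) *ᵥ z) ≤ 0 := by
      have h0 : (0:ℝ) ≤ z ⬝ᵥ ((-(S + τ • (Eᵀ * M * E))) *ᵥ z) := by
        simpa using h
      rw [Matrix.neg_mulVec, dotProduct_neg] at h0
      linarith
    have hSz : z ⬝ᵥ (S *ᵥ z) = φ t - v t ⬝ᵥ (Pi2 *ᵥ v t) := by
      rw [hS, hzdef, Matrix.fromBlocks_mulVec, sumElim_dotProduct_sumElim]
      simp only [Matrix.add_mulVec, ← Matrix.mulVec_mulVec, dotProduct_add,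
        Matrix.neg_mulVec, dotProduct_neg]
      rw [dot_transpose_mulVec A, dot_transpose_mulVec B]
      simp only [hφ]
      simp [Matrix.mulVec_add, add_dotProduct, dotProduct_add]
      ring
    have hQz : z ⬝ᵥ ((Eᵀ * M * E) *ᵥ z) = g t ⬝ᵥ (M *ᵥ g t) := by
      rw [← Matrix.mulVec_mulVec, ← Matrix.mulVec_mulVec, dot_transpose_mulVec E]
      have : E *ᵥ z = g t := by
        rw [hE, hzdef, Matrix.fromCols_mulVec_sumElim, hg]
      rw [this]
    rw [Matrix.add_mulVec, dotProduct_add, hSz, Matrix.smul_mulVec,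
      dotProduct_smul, hQz, smul_eq_mul] at hneg
    linarith
  -- continuity facts on [0, T]
  have hxC : ContinuousOn x (Set.Icc 0 T) :=
    fun t ht => (hx t ht.1).continuousAt.continuousWithinAt
  have hmulC : ∀ {p : ℕ} {q : ℕ} (N : Matrix (Fin p) (Fin q) ℝ), True := fun _ => trivial
  have hAx : ContinuousOn (fun t => A *ᵥ x t + B *ᵥ v t) (Set.Icc 0 T) := by
    apply ContinuousOn.add
    · exact (Continuous.matrix_mulVec continuous_const continuous_id).comp_continuousOn hxC
    · exact ((Continuous.matrix_mulVec continuous_const continuous_id).comp hv).continuousOn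
  have hPx : ContinuousOn (fun t => P *ᵥ x t) (Set.Icc 0 T) :=
    (Continuous.matrix_mulVec continuous_const continuous_id).comp_continuousOn hxC
  have hdotC : Continuous fun p : (Fin k → ℝ) × (Fin k → ℝ) => p.1 ⬝ᵥ p.2 :=
    Continuous.dotProduct continuous_fst continuous_snd
  have hφC : ContinuousOn φ (Set.Icc 0 T) := by
    apply ContinuousOn.add
    · exact hdotC.comp_continuousOn (hAx.prodMk hPx)
    · exact hdotC.comp_continuousOn
        (hxC.prodMk ((Continuous.matrix_mulVec continuous_const continuous_id).comp_continuousOn hAx))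
  have hgC : ContinuousOn (fun t => g t ⬝ᵥ (M *ᵥ g t)) (Set.Icc 0 T) := by
    have hgc : ContinuousOn g (Set.Icc 0 T) := by
      have : ContinuousOn (fun t => C *ᵥ x t + D *ᵥ v t) (Set.Icc 0 T) := by
        apply ContinuousOn.add
        · exact (Continuous.matrix_mulVec continuous_const continuous_id).comp_continuousOn hxC
        · exact ((Continuous.matrix_mulVec continuous_const continuous_id).comp hv).continuousOn
      simpa only [← hg] using this
    exact (Continuous.dotProduct continuous_fst continuous_snd).comp_continuousOn
      (hgc.prodMk ((Continuous.matrix_mulVec continuous_const continuous_id).comp_continuousOn hgc))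
  have hvC : ContinuousOn (fun t => v t ⬝ᵥ (Pi2 *ᵥ v t)) (Set.Icc 0 T) :=
    ((Continuous.dotProduct continuous_fst continuous_snd).comp
      (hv.prodMk ((Continuous.matrix_mulVec continuous_const continuous_id).comp hv))).continuousOn
  -- integrability
  have hφI : IntervalIntegrable φ MeasureTheory.volume 0 T :=
    ContinuousOn.intervalIntegrable_of_Icc hT hφC
  have hgI : IntervalIntegrable (fun t => g t ⬝ᵥ (M *ᵥ g t)) MeasureTheory.volume 0 T :=
    ContinuousOn.intervalIntegrable_of_Icc hT hgC
  have hvI : IntervalIntegrable (fun t => v t ⬝ᵥ (Pi2 *ᵥ v t)) MeasureTheory.volume 0 T :=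
    ContinuousOn.intervalIntegrable_of_Icc hT hvC
  -- FTC : ∫ φ = V T
  have hFTC : ∫ t in (0:ℝ)..T, φ t = x T ⬝ᵥ (P *ᵥ x T) := by
    have hderiv : ∀ t ∈ Set.uIcc (0:ℝ) T,
        HasDerivAt (fun s => x s ⬝ᵥ (P *ᵥ x s)) (φ t) t := by
      intro t ht
      rw [Set.uIcc_of_le hT] at ht
      exact quad_hasDerivAt P (hx t ht.1)
    have := intervalIntegral.integral_eq_sub_of_hasDerivAt hderiv hφI
    rw [this, hx0]
    simp
  -- combine
  have hmono : ∫ t in (0:ℝ)..T, (φ t + τ * (g t ⬝ᵥ (M *ᵥ g t))) ≤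
      ∫ t in (0:ℝ)..T, v t ⬝ᵥ (Pi2 *ᵥ v t) := by
    apply intervalIntegral.integral_mono_on hT (hφI.add (hgI.const_mul τ)) hvI
    intro t _
    exact key t
  have hsplit : ∫ t in (0:ℝ)..T, (φ t + τ * (g t ⬝ᵥ (M *ᵥ g t))) =
      (∫ t in (0:ℝ)..T, φ t) + τ * ∫ t in (0:ℝ)..T, g t ⬝ᵥ (M *ᵥ g t) := by
    rw [intervalIntegral.integral_add hφI (hgI.const_mul τ),
      intervalIntegral.integral_const_mul]
  rw [hsplit, hFTC] at hmono
  linarith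
end

section
/- Let h : ℝ → ℂ be given by h(ω) := 0.13·(2 + iω)/(0.6 + iω)², the frequency response of the transfer function H(s) = 0.13·(s + 2)/(s + 0.6)². Then for every ω ∈ ℝ: 0.4 + Re(h(ω)) − 2·|h(ω)|² ≥ 0; equivalently, every point h(ω) of the Nyquist plot lies in the region S(M) for M = [[0.4, 0.5], [0.5, −2]]. -/
/-- The frequency response of the transfer function `H(s) = 0.13·(s + 2)/(s + 0.6)²`. -/
noncomputable def freqResp (ω : ℝ) : ℂ :=
  0.13 * (2 + Complex.I * ω) / (0.6 + Complex.I * ω) ^ 2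

lemma key (ω : ℝ) : 0 ≤ 0.4 + (freqResp ω).re - 2 * ‖freqResp ω‖ ^ 2 := by
  have hD : (0:ℝ) < (0.36 + ω^2)^2 := by positivity
  have hne : ((0.36 + ω^2)^2 : ℝ) ≠ 0 := ne_of_gt hD
  have h1 : (freqResp ω).re = 0.13*(0.72-0.8*ω^2)/(0.36+ω^2)^2 := by
    simp [freqResp, Complex.div_re, Complex.normSq_apply, pow_two, Complex.mul_re,
      Complex.mul_im, Complex.add_re, Complex.add_im]
    norm_num
    rw [← add_div, div_eq_div_iff (by nlinarith [sq_nonneg ω, sq_nonneg (ω*ω)]) (by nlinarith [sq_nonneg ω, sq_nonneg (ω*ω)])]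
    ring
  have h2 : ‖freqResp ω‖ ^ 2 = 0.0169*(4+ω^2)/(0.36+ω^2)^2 := by
    rw [Complex.sq_norm]
    simp [freqResp, Complex.normSq_div, Complex.normSq_apply, pow_two, Complex.mul_re,
      Complex.mul_im, Complex.add_re, Complex.add_im]
    norm_num
    rw [div_eq_div_iff (by nlinarith [sq_nonneg ω, sq_nonneg (ω*ω)]) (by nlinarith [sq_nonneg ω, sq_nonneg (ω*ω)])]
    ring
  rw [h1, h2]
  have e : 0.4 + 0.13*(0.72-0.8*ω^2)/(0.36+ω^2)^2 - 2*(0.0169*(4+ω^2)/(0.36+ω^2)^2)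
      = (0.4*ω^4 + 0.1502*ω^2 + 0.01024)/(0.36+ω^2)^2 := by
    field_simp
    ring
  rw [e]
  positivity


/-- Every point `h(ω)` of the Nyquist plot of `H(s) = 0.13(s+2)/(s+0.6)²` satisfies
`0.4 + Re h(ω) − 2·|h(ω)|² ≥ 0`, i.e. lies in `S(M)` for `M = [[0.4, 0.5], [0.5, −2]]`. -/
theorem nyquist_in_sregion :
    ∀ ω : ℝ,
      0 ≤ 0.4 + (freqResp ω).re - 2 * ‖freqResp ω‖ ^ 2 ∧
      freqResp ω ∈ SRegion 0.4 0.5 (-2) := by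
  intro ω
  refine ⟨key ω, ?_⟩
  have := key ω
  simp only [SRegion, Set.mem_setOf_eq]
  linarith
end
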